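/- arXiv:2402.10842 — 2 statements merged into one kernel-verified Lean document; each statement's English description precedes it below -/
import Mathlib

section
/- Let G be a triangle-free simple graph of order n ≥ 2. Then PC(G) = n if and only if G is a complete bipartite graph. -/
namespace PCPaper

variable {V : Type*}

/-- `S` is a dominating set of `G`. -/
def IsDomSet (G : SimpleGraph V) (S : Set V) : Prop :=
  ∀ v : V, v ∈ S ∨ ∃ u ∈ S, G.Adj u v

/-- `S` is a paired dominating set of `G`: a dominating set such that the subgraph of `G`
induced by `S` contains a perfect matching (a matching whose vertex set is exactly `S`). -/
def IsPairedDomSet (G : SimpleGraph V) (S : Set V) : Prop :=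
  IsDomSet G S ∧ ∃ M : G.Subgraph, M.verts = S ∧ M.IsMatching

/-- Disjoint sets `A`, `B`, neither a paired dominating set, whose union is one. -/
def PairedCoalition (G : SimpleGraph V) (A B : Set V) : Prop :=
  Disjoint A B ∧ ¬ IsPairedDomSet G A ∧ ¬ IsPairedDomSet G B ∧ IsPairedDomSet G (A ∪ B)

variable [Fintype V] [DecidableEq V]

/-- `π` is a paired coalition partition of `G`: no part is a paired dominating set and every
part forms a paired coalition with some other part. -/
def IsPCPartition (G : SimpleGraph V) (π : Finpartition (Finset.univ : Finset V)) : Prop :=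
  ∀ A ∈ π.parts, ¬ IsPairedDomSet G (A : Set V) ∧
    ∃ B ∈ π.parts, B ≠ A ∧ PairedCoalition G (A : Set V) (B : Set V)

/-- The paired coalition number: the maximum number of parts of a pc-partition of `G`,
and `0` if `G` admits no pc-partition. -/
noncomputable def pcNumber (G : SimpleGraph V) : ℕ :=
  sSup {k | ∃ π : Finpartition (Finset.univ : Finset V), IsPCPartition G π ∧ π.parts.card = k}

/-- The paired coalition graph of a partition `π` of `G`: vertices are the parts of `π`,
two parts being adjacent iff they form a paired coalition in `G`. -/
def PCG (G : SimpleGraph V) (π : Finpartition (Finset.univ : Finset V)) :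
    SimpleGraph {A : Finset V // A ∈ π.parts} where
  Adj A B := PairedCoalition G ((A : Finset V) : Set V) ((B : Finset V) : Set V)
  symm := by
    constructor
    rintro A B ⟨h1, h2, h3, h4⟩
    exact ⟨h1.symm, h3, h2, by rwa [Set.union_comm]⟩
  loopless := by
    constructor
    rintro A ⟨h1, h2, h3, h4⟩
    exact h2 (by rwa [Set.union_self] at h4)

end PCPaper

namespace PCPaper

/-- `G` is a complete bipartite graph: its vertex set splits into two nonempty
independent sets with all edges between them. -/
def IsCompleteBipartite {V : Type*} (G : SimpleGraph V) : Prop :=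
  ∃ s : Set V, s.Nonempty ∧ sᶜ.Nonempty ∧
    ∀ u v : V, G.Adj u v ↔ ((u ∈ s ∧ v ∉ s) ∨ (u ∉ s ∧ v ∈ s))

end PCPaper

namespace PCPaper

variable {V : Type*}

/-- A singleton is never a paired dominating set. -/
lemma not_pds_singleton (G : SimpleGraph V) (v : V) : ¬ IsPairedDomSet G {v} := by
  rintro ⟨-, M, hMv, hM⟩
  have hv : v ∈ M.verts := by rw [hMv]; exact Set.mem_singleton v
  obtain ⟨w, hw, -⟩ := hM hv
  have hwmem : w ∈ M.verts := M.edge_vert hw.symm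
  rw [hMv, Set.mem_singleton_iff] at hwmem
  subst hwmem
  exact G.loopless.irrefl w (M.adj_sub hw)

lemma no_tri [DecidableEq V] {G : SimpleGraph V} (htf : G.CliqueFree 3) {a b c : V}
    (hab : G.Adj a b) (hac : G.Adj a c) (hbc : G.Adj b c) : False :=
  htf {a, b, c} (SimpleGraph.is3Clique_triple_iff.2 ⟨hab, hac, hbc⟩)

/-- A dominating adjacent pair of distinct vertices yields a paired coalition of singletons. -/
lemma coal_of_dom_edge {G : SimpleGraph V} {v u : V} (hadj : G.Adj v u)
    (hdom : IsDomSet G ({v} ∪ {u} : Set V)) :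
    PairedCoalition G ({v} : Set V) ({u} : Set V) := by
  refine ⟨Set.disjoint_singleton.2 hadj.ne,
    not_pds_singleton G v, not_pds_singleton G u, hdom, G.subgraphOfAdj hadj, ?_,
    SimpleGraph.Subgraph.IsMatching.subgraphOfAdj hadj⟩
  rw [SimpleGraph.subgraphOfAdj_verts, Set.singleton_union]

end PCPaper

open PCPaper in
/-- For a triangle-free graph `G` of order `n ≥ 2`, `PC(G) = n` iff `G` is a complete
bipartite graph. -/
theorem stmt_18 {V : Type*} [Fintype V] [DecidableEq V] (G : SimpleGraph V)
    (htf : G.CliqueFree 3) (hn : 2 ≤ Fintype.card V) :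
    pcNumber G = Fintype.card V ↔ IsCompleteBipartite G := by
  classical
  set S : Set ℕ := {k | ∃ π : Finpartition (Finset.univ : Finset V),
      IsPCPartition G π ∧ π.parts.card = k} with hS
  have hbdd : BddAbove S := by
    refine ⟨Fintype.card V, ?_⟩
    rintro k ⟨π, -, rfl⟩
    simpa using π.card_parts_le_card
  constructor
  · -- forward direction
    intro h
    have hne : S.Nonempty := by
      by_contra h'
      rw [Set.not_nonempty_iff_eq_empty] at h'
      rw [pcNumber, ← hS, h', csSup_empty] at h
      simp at h
      omega
    have hmem : Fintype.card V ∈ S := by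
      have := Nat.sSup_mem hne hbdd
      rwa [show sSup S = Fintype.card V from h] at this
    obtain ⟨π, hπ, hcard⟩ := hmem
    -- every part is a singleton
    have hsing : ∀ A ∈ π.parts, ∃ v, A = {v} := by
      intro A hA
      rw [← Finset.card_eq_one]
      by_contra hc
      have h1 : ∀ B ∈ π.parts, 1 ≤ B.card := fun B hB =>
        Finset.card_pos.2 (π.nonempty_of_mem_parts hB)
      have h2 : 1 < A.card := lt_of_le_of_ne (h1 A hA) (Ne.symm hc)
      have hlt : ∑ B ∈ π.parts, 1 < ∑ B ∈ π.parts, B.card :=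
        Finset.sum_lt_sum h1 ⟨A, hA, h2⟩
      rw [π.sum_card_parts, Finset.sum_const, smul_eq_mul, mul_one, hcard,
        Finset.card_univ] at hlt
      exact lt_irrefl _ hlt
    -- every vertex has a dominating partner
    have key : ∀ v : V, ∃ u, G.Adj v u ∧ IsDomSet G ({v} ∪ {u} : Set V) := by
      intro v
      obtain ⟨A, hA, hvA⟩ := π.exists_mem (Finset.mem_univ v)
      obtain ⟨v', rfl⟩ := hsing A hA
      rw [Finset.mem_singleton] at hvA
      subst hvA
      obtain ⟨-, B, hB, hBA, -, -, -, hpds⟩ := hπ _ hA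
      obtain ⟨u, rfl⟩ := hsing B hB
      simp only [Finset.coe_singleton] at hpds
      obtain ⟨hdom, M, hMverts, hM⟩ := hpds
      have hv : v ∈ M.verts := by rw [hMverts]; left; rfl
      obtain ⟨w, hw, -⟩ := hM hv
      have hwmem : w ∈ M.verts := M.edge_vert hw.symm
      rw [hMverts] at hwmem
      rcases hwmem with hwv | hwu
      · rw [Set.mem_singleton_iff] at hwv
        subst hwv
        exact absurd (M.adj_sub hw) (G.loopless.irrefl w)
      · rw [Set.mem_singleton_iff] at hwu
        subst hwu
        exact ⟨w, M.adj_sub hw, hdom⟩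
    -- structural argument
    have : 0 < Fintype.card V := by omega
    obtain ⟨v₀⟩ : Nonempty V := Fintype.card_pos_iff.mp this
    obtain ⟨u₀, hadj0, hdom0⟩ := key v₀
    refine ⟨G.neighborSet u₀, ⟨v₀, hadj0.symm⟩, ⟨u₀, fun h => G.loopless.irrefl u₀ h⟩, ?_⟩
    have hv₀ : v₀ ∈ G.neighborSet u₀ := hadj0.symm
    -- vertices outside N(u₀) are adjacent to v₀
    have hcompl : ∀ w, w ∉ G.neighborSet u₀ → G.Adj v₀ w := by
      intro w hw
      rcases hdom0 w with (hwv | hwu) | ⟨x, hx, hxw⟩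
      · rw [Set.mem_singleton_iff] at hwv; subst hwv; exact absurd hv₀ hw
      · rw [Set.mem_singleton_iff] at hwu; subst hwu; exact hadj0
      · rcases hx with hxv | hxu
        · rw [Set.mem_singleton_iff] at hxv; subst hxv; exact hxw
        · rw [Set.mem_singleton_iff] at hxu; subst hxu; exact absurd hxw hw
    intro u v
    constructor
    · intro huv
      by_cases hu : u ∈ G.neighborSet u₀ <;> by_cases hv : v ∈ G.neighborSet u₀
      · exact absurd huv (fun h => no_tri htf hu hv h)
      · exact Or.inl ⟨hu, hv⟩
      · exact Or.inr ⟨hu, hv⟩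
      · exact absurd huv (fun h => no_tri htf (hcompl u hu) (hcompl v hv) h)
    · -- all cross pairs are adjacent
      have cross : ∀ a b : V, a ∈ G.neighborSet u₀ → b ∉ G.neighborSet u₀ → G.Adj a b := by
        intro a b ha hb
        obtain ⟨a', hadj', hdom'⟩ := key a
        have ha' : a' ∉ G.neighborSet u₀ := by
          intro ha'
          exact no_tri htf ha ha' hadj'
        rcases hdom' b with (hbv | hbu) | ⟨x, hx, hxb⟩
        · rw [Set.mem_singleton_iff] at hbv; subst hbv; exact absurd ha hb
        · rw [Set.mem_singleton_iff] at hbu; subst hbu; exact hadj'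
        · rcases hx with hxa | hxa'
          · rw [Set.mem_singleton_iff] at hxa; subst hxa; exact hxb
          · rw [Set.mem_singleton_iff] at hxa'; subst hxa'
            exact (no_tri htf (hcompl _ ha') (hcompl b hb) hxb).elim
      rintro (⟨hu, hv⟩ | ⟨hu, hv⟩)
      · exact cross u v hu hv
      · exact (cross v u hv hu).symm
  · -- reverse direction
    rintro ⟨s, ⟨a, ha⟩, ⟨b, hb⟩, hiff⟩
    rw [Set.mem_compl_iff] at hb
    -- dominating edges across the bipartition
    have hdomedge : ∀ v u : V, v ∈ s → u ∉ s → IsDomSet G ({v} ∪ {u} : Set V) := by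
      intro v u hv hu w
      by_cases hw : w ∈ s
      · exact Or.inr ⟨u, Or.inr rfl, (hiff u w).2 (Or.inr ⟨hu, hw⟩)⟩
      · exact Or.inr ⟨v, Or.inl rfl, (hiff v w).2 (Or.inl ⟨hv, hw⟩)⟩
    have hpart : IsPCPartition G ⊥ := by
      intro A hA
      rw [Finpartition.mem_bot_iff] at hA
      obtain ⟨v, -, rfl⟩ := hA
      refine ⟨by simpa using not_pds_singleton G v, ?_⟩
      by_cases hv : v ∈ s
      · refine ⟨{b}, Finpartition.mem_bot_iff.2 ⟨b, Finset.mem_univ b, rfl⟩, ?_, ?_⟩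
        · intro h
          rw [Finset.singleton_inj] at h
          exact hb (h ▸ hv)
        · simpa using coal_of_dom_edge ((hiff v b).2 (Or.inl ⟨hv, hb⟩)) (hdomedge v b hv hb)
      · refine ⟨{a}, Finpartition.mem_bot_iff.2 ⟨a, Finset.mem_univ a, rfl⟩, ?_, ?_⟩
        · intro h
          rw [Finset.singleton_inj] at h
          exact hv (h ▸ ha)
        · have hc := coal_of_dom_edge ((hiff v a).2 (Or.inr ⟨hv, ha⟩))
            (by rw [Set.union_comm]; exact hdomedge a v ha hv)
          simpa using hc
    have hmem : Fintype.card V ∈ S := ⟨⊥, hpart, by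
      rw [Finpartition.card_bot, Finset.card_univ]⟩
    exact le_antisymm (csSup_le ⟨_, hmem⟩ (by rintro k ⟨π, -, rfl⟩; simpa using π.card_parts_le_card))
      (le_csSup hbdd hmem)
end

section
/- Let G be a simple graph of order n that contains a cycle and whose girth is at least 6. Then PC(G) < n − 2. -/
namespace PCAux
open SimpleGraph Walk PCPaper

open SimpleGraph Walk

variable {V : Type*} {G : SimpleGraph V}

lemma cycle_len (hg : 6 ≤ G.girth) (hcyc : ¬ G.IsAcyclic)
    {a : V} (w : G.Walk a a) (hw : w.IsCycle) : 6 ≤ w.length := by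
  have h1 : G.egirth ≠ ⊤ := SimpleGraph.egirth_eq_top.not.mpr hcyc
  have h2 : (6 : ℕ∞) ≤ G.egirth := by
    rw [← ENat.coe_toNat h1]
    exact_mod_cast hg
  have := SimpleGraph.le_egirth.mp h2 a w hw
  exact_mod_cast this

lemma two_nbrs {u : V} {c : G.Walk u u} (hc : c.IsCycle) :
    ∃ w1 w2, w1 ≠ w2 ∧ G.Adj u w1 ∧ G.Adj u w2 := by
  cases c with
  | nil => exact absurd rfl hc.ne_nil
  | @cons _ v _ h q =>
    obtain ⟨w2, h2, r, hr⟩ := Walk.exists_eq_cons_of_ne h.ne q.reverse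
    refine ⟨v, w2, ?_, h, h2⟩
    rintro rfl
    have hmem : s(u, v) ∈ q.edges := by
      have : s(u, v) ∈ q.reverse.edges := by rw [hr]; simp [Sym2.eq_swap]
      simpa [Walk.edges_reverse] using this
    have hnd := hc.isTrail.edges_nodup
    rw [Walk.edges_cons, List.nodup_cons] at hnd
    exact hnd.1 hmem

lemma two_nbrs_mem [DecidableEq V] {a u : V} {c : G.Walk a a} (hc : c.IsCycle) (hu : u ∈ c.support) :
    ∃ w1 w2, w1 ≠ w2 ∧ G.Adj u w1 ∧ G.Adj u w2 :=
  two_nbrs (hc.rotate hu)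


open SimpleGraph Walk

variable {V : Type*} {G : SimpleGraph V}

lemma noTri_of (h6 : ∀ ⦃a : V⦄ (w : G.Walk a a), w.IsCycle → 6 ≤ w.length)
    {a b c : V} (hab : G.Adj a b) (hbc : G.Adj b c) (hca : G.Adj c a) : False := by
  have hac : a ≠ c := hca.ne'
  have hcyc : (Walk.cons hab (Walk.cons hbc (Walk.cons hca Walk.nil))).IsCycle := by
    rw [Walk.isCycle_def]
    refine ⟨?_, by simp, ?_⟩
    · rw [Walk.isTrail_def]
      simp [hab.ne, hbc.ne, hac, Sym2.eq_iff]
      aesop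
    · simp [hbc.ne, hca.ne, hab.ne', hac]
  have := h6 _ hcyc
  simp at this

lemma noC4_of (h6 : ∀ ⦃a : V⦄ (w : G.Walk a a), w.IsCycle → 6 ≤ w.length)
    {a b c d : V} (hab : G.Adj a b) (hbc : G.Adj b c) (hcd : G.Adj c d) (hda : G.Adj d a)
    (hac : a ≠ c) (hbd : b ≠ d) : False := by
  have hcyc : (Walk.cons hab (Walk.cons hbc (Walk.cons hcd (Walk.cons hda Walk.nil)))).IsCycle := by
    rw [Walk.isCycle_def]
    refine ⟨?_, by simp, ?_⟩
    · rw [Walk.isTrail_def]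
      simp [hab.ne, hbc.ne, hcd.ne, hda.ne, hac, hbd, Sym2.eq_iff]
      aesop
    · simp [hbc.ne, hcd.ne, hda.ne', hac, hbd]
      aesop
  have := h6 _ hcyc
  simp at this

lemma noC5_of (h6 : ∀ ⦃a : V⦄ (w : G.Walk a a), w.IsCycle → 6 ≤ w.length)
    {a b c d e : V} (hab : G.Adj a b) (hbc : G.Adj b c) (hcd : G.Adj c d) (hde : G.Adj d e)
    (hea : G.Adj e a) (hac : a ≠ c) (had : a ≠ d) (hbd : b ≠ d) (hbe : b ≠ e) (hce : c ≠ e) :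
    False := by
  have hcyc : (Walk.cons hab (Walk.cons hbc (Walk.cons hcd (Walk.cons hde
      (Walk.cons hea Walk.nil))))).IsCycle := by
    rw [Walk.isCycle_def]
    refine ⟨?_, by simp, ?_⟩
    · rw [Walk.isTrail_def]
      simp [hab.ne, hbc.ne, hcd.ne, hde.ne, hea.ne, hac, had, hbd, hbe, hce, Sym2.eq_iff]
      aesop
    · simp [hbc.ne, hcd.ne, hde.ne, hea.ne', hac, had, hbd, hbe, hce]
      aesop
  have := h6 _ hcyc
  simp at this



variable {V : Type*} {G : SimpleGraph V}

lemma matching_unique {M : G.Subgraph} (hM : M.IsMatching) {a b c : V}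
    (hab : M.Adj a b) (hac : M.Adj a c) : b = c := by
  obtain ⟨w, -, hu⟩ := hM (M.edge_vert hab)
  rw [hu b hab, hu c hac]

lemma pds_pair {a b : V} (hab : a ≠ b) (h : IsPairedDomSet G {a, b}) : G.Adj a b := by
  obtain ⟨-, M, hMv, hM⟩ := h
  obtain ⟨w, hw, -⟩ := hM (show a ∈ M.verts by rw [hMv]; simp)
  have hwv : w ∈ M.verts := M.edge_vert hw.symm
  rw [hMv] at hwv
  have hwa : w ≠ a := (M.adj_sub hw).ne'
  rcases hwv with h' | h'
  · exact absurd h' hwa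
  · rw [Set.mem_singleton_iff] at h'; subst h'; exact M.adj_sub hw

lemma quad_core {M : G.Subgraph} (hM : M.IsMatching) {x t1 t2 t3 : V}
    (hMv : M.verts = {t1, t2, t3, x}) (hw : M.Adj x t1)
    (h21 : t2 ≠ t1) (h2x : t2 ≠ x) (h23 : t2 ≠ t3) : G.Adj t2 t3 := by
  obtain ⟨u, hu, -⟩ := hM (show t2 ∈ M.verts by rw [hMv]; simp)
  have huv : u ∈ M.verts := M.edge_vert hu.symm
  rw [hMv] at huv
  have hu2 : u ≠ t2 := (M.adj_sub hu).ne'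
  have hux : u ≠ x := by
    rintro rfl
    exact h21 (matching_unique hM hu.symm hw)
  have hu1 : u ≠ t1 := by
    rintro rfl
    exact h2x (matching_unique hM hu.symm hw.symm)
  have : u = t3 := by
    simp only [Set.mem_insert_iff, Set.mem_singleton_iff] at huv
    tauto
  subst this
  exact M.adj_sub hu

lemma pds_quad {t1 t2 t3 x : V} (h12 : t1 ≠ t2) (h13 : t1 ≠ t3) (h23 : t2 ≠ t3)
    (hx1 : x ≠ t1) (hx2 : x ≠ t2) (hx3 : x ≠ t3)
    (h : IsPairedDomSet G {t1, t2, t3, x}) :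
    (G.Adj x t1 ∧ G.Adj t2 t3) ∨ (G.Adj x t2 ∧ G.Adj t1 t3) ∨ (G.Adj x t3 ∧ G.Adj t1 t2) := by
  obtain ⟨-, M, hMv, hM⟩ := h
  obtain ⟨w, hw, -⟩ := hM (show x ∈ M.verts by rw [hMv]; simp)
  have hwv : w ∈ M.verts := M.edge_vert hw.symm
  rw [hMv] at hwv
  have hwx : w ≠ x := (M.adj_sub hw).ne'
  simp only [Set.mem_insert_iff, Set.mem_singleton_iff] at hwv
  have hwT : w = t1 ∨ w = t2 ∨ w = t3 := by tauto
  rcases hwT with rfl | rfl | rfl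
  · exact Or.inl ⟨M.adj_sub hw, quad_core hM hMv hw h12.symm hx2.symm h23⟩
  · refine Or.inr (Or.inl ⟨M.adj_sub hw, ?_⟩)
    have hMv' : M.verts = {w, t1, t3, x} := by rw [hMv]; ext v; simp; tauto
    exact quad_core hM hMv' hw h12 hx1.symm h13
  · refine Or.inr (Or.inr ⟨M.adj_sub hw, ?_⟩)
    have hMv' : M.verts = {w, t1, t2, x} := by rw [hMv]; ext v; simp; tauto
    exact quad_core hM hMv' hw h13 hx1.symm h12

lemma coalition_even [Fintype V] [DecidableEq V] {A B : Finset V}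
    (h : PairedCoalition G ↑A ↑B) : Even (A.card + B.card) := by
  classical
  obtain ⟨hdisj, -, -, -, M, hMv, hM⟩ := h
  haveI : Fintype M.verts := Fintype.ofFinite _
  have he := hM.even_card
  have hfs : M.verts.toFinset = A ∪ B := by ext v; simp [hMv]
  rw [hfs, Finset.card_union_of_disjoint (Finset.disjoint_coe.mp hdisj)] at he
  exact he



variable {V : Type*} {G : SimpleGraph V}

def NoTri (G : SimpleGraph V) : Prop := ∀ {a b c : V}, G.Adj a b → G.Adj b c → G.Adj c a → False
def NoC4 (G : SimpleGraph V) : Prop := ∀ {a b c d : V}, G.Adj a b → G.Adj b c → G.Adj c d →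
    G.Adj d a → a ≠ c → b ≠ d → False
def NoC5 (G : SimpleGraph V) : Prop := ∀ {a b c d e : V}, G.Adj a b → G.Adj b c → G.Adj c d →
    G.Adj d e → G.Adj e a → a ≠ c → a ≠ d → b ≠ d → b ≠ e → c ≠ e → False

lemma exists_outside3 [DecidableEq V] {v0 : V} {p : G.Walk v0 v0} (hp : p.IsCycle)
    (hlen : 6 ≤ p.length) (t1 t2 t3 : V) :
    ∃ u v w : V, u ∈ p.support ∧ v ∈ p.support ∧ w ∈ p.support ∧ u ≠ v ∧ u ≠ w ∧ v ≠ w ∧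
      u ∉ ({t1, t2, t3} : Finset V) ∧ v ∉ ({t1, t2, t3} : Finset V) ∧
      w ∉ ({t1, t2, t3} : Finset V) := by
  have hnd := hp.support_nodup
  have h1 : p.support.tail.toFinset.card = p.length := by
    rw [List.toFinset_card_of_nodup hnd, List.length_tail, Walk.length_support]
    omega
  have h2 := Finset.le_card_sdiff ({t1, t2, t3} : Finset V) p.support.tail.toFinset
  have h3 : ({t1, t2, t3} : Finset V).card ≤ 3 := by
    refine (Finset.card_insert_le _ _).trans ?_
    have := Finset.card_insert_le t2 ({t3} : Finset V)
    simp at this ⊢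
    omega
  have hlt : 2 < (p.support.tail.toFinset \ {t1, t2, t3}).card := by omega
  obtain ⟨u, v, w, hu, hv, hw, huv, huw, hvw⟩ := Finset.two_lt_card_iff.mp hlt
  rw [Finset.mem_sdiff, List.mem_toFinset] at hu hv hw
  exact ⟨u, v, w, List.mem_of_mem_tail hu.1, List.mem_of_mem_tail hv.1,
    List.mem_of_mem_tail hw.1, huv, huw, hvw, hu.2, hv.2, hw.2⟩

lemma nbr_eq_of_dom (noTri : NoTri G) (noC4 : NoC4 G) {a b u : V} (hab : G.Adj a b)
    (hdom : ∀ v : V, v = a ∨ v = b ∨ G.Adj a v ∨ G.Adj b v)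
    (hua : G.Adj a u) (hub : u ≠ b) {w : V} (huw : G.Adj u w) : w = a := by
  by_contra hwa
  rcases hdom w with h | h | h | h
  · exact hwa h
  · subst h; exact noTri hab huw.symm hua.symm
  · exact noTri hua huw h.symm
  · exact noC4 hua huw h.symm hab.symm (fun hh => hwa hh.symm) hub

lemma no_dom_edge [DecidableEq V] (noTri : NoTri G) (noC4 : NoC4 G) {a b : V} (hab : G.Adj a b)
    (hdom : ∀ v : V, v = a ∨ v = b ∨ G.Adj a v ∨ G.Adj b v)
    {v0 : V} {p : G.Walk v0 v0} (hp : p.IsCycle) (hlen : 6 ≤ p.length)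
    (two_nbrs_mem : ∀ {a u : V} {c : G.Walk a a}, c.IsCycle → u ∈ c.support →
      ∃ w1 w2, w1 ≠ w2 ∧ G.Adj u w1 ∧ G.Adj u w2) : False := by
  obtain ⟨u, -, -, hus, -, -, -, -, -, hu, -, -⟩ := exists_outside3 hp hlen a b b
  simp only [Finset.mem_insert, Finset.mem_singleton] at hu
  push_neg at hu
  obtain ⟨hua, hub, -⟩ := hu
  obtain ⟨w1, w2, hw12, h1, h2⟩ := two_nbrs_mem hp hus
  have hdom' : ∀ v : V, v = b ∨ v = a ∨ G.Adj b v ∨ G.Adj a v := by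
    intro v; rcases hdom v with h | h | h | h <;> tauto
  rcases hdom u with h | h | h | h
  · exact hua h
  · exact hub h
  · exact hw12 ((nbr_eq_of_dom noTri noC4 hab hdom h hub h1).trans
      (nbr_eq_of_dom noTri noC4 hab hdom h hub h2).symm)
  · exact hw12 ((nbr_eq_of_dom noTri noC4 hab.symm hdom' h hua h1).trans
      (nbr_eq_of_dom noTri noC4 hab.symm hdom' h hua h2).symm)


lemma c5_core (noC5 : NoC5 G) {u w ta tb tc : V} (huw : G.Adj u w) (hta : G.Adj u ta)
    (hwb : G.Adj w tb) (hbc : G.Adj tb tc) (hac : G.Adj ta tc)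
    (hub : u ≠ tb) (huc : u ≠ tc) (hwc : w ≠ tc) (hwa : w ≠ ta) (hba : tb ≠ ta) : False :=
  noC5 huw hwb hbc hac.symm hta.symm hub huc hwc hwa hba

lemma nbr_in_T (noTri : NoTri G) (noC5 : NoC5 G) {t1 t2 t3 : V}
    (h12 : t1 ≠ t2) (h13 : t1 ≠ t3) (h23 : t2 ≠ t3)
    (hall : ∀ x, x ≠ t1 → x ≠ t2 → x ≠ t3 →
      (G.Adj x t1 ∧ G.Adj t2 t3) ∨ (G.Adj x t2 ∧ G.Adj t1 t3) ∨ (G.Adj x t3 ∧ G.Adj t1 t2))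
    {u w : V} (hu1 : u ≠ t1) (hu2 : u ≠ t2) (hu3 : u ≠ t3) (huw : G.Adj u w) :
    w = t1 ∨ w = t2 ∨ w = t3 := by
  by_contra hcon
  push_neg at hcon
  obtain ⟨hw1, hw2, hw3⟩ := hcon
  rcases hall u hu1 hu2 hu3 with ⟨ha, he⟩ | ⟨ha, he⟩ | ⟨ha, he⟩ <;>
    rcases hall w hw1 hw2 hw3 with ⟨hb, hf⟩ | ⟨hb, hf⟩ | ⟨hb, hf⟩
  · exact noTri huw hb ha.symm
  · exact c5_core noC5 huw ha hb he hf hu2 hu3 hw3 hw1 h12.symm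
  · exact c5_core noC5 huw ha hb he.symm hf hu3 hu2 hw2 hw1 h13.symm
  · exact c5_core noC5 huw ha hb he hf hu1 hu3 hw3 hw2 h12
  · exact noTri huw hb ha.symm
  · exact c5_core noC5 huw ha hb he.symm hf.symm hu3 hu1 hw1 hw2 h23.symm
  · exact c5_core noC5 huw ha hb he hf.symm hu1 hu2 hw2 hw3 h13
  · exact c5_core noC5 huw ha hb he.symm hf.symm hu2 hu1 hw1 hw3 h23
  · exact noTri huw hb ha.symm

lemma pickP (noTri : NoTri G) {ta tb tc x n1 n2 : V} (hedge : G.Adj ta tb)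
    (h1 : G.Adj x n1) (h2 : G.Adj x n2) (hne : n1 ≠ n2)
    (m1 : n1 = ta ∨ n1 = tb ∨ n1 = tc) (m2 : n2 = ta ∨ n2 = tb ∨ n2 = tc) :
    G.Adj x tc ∧ (G.Adj x ta ∨ G.Adj x tb) := by
  rcases m1 with h | h | h <;> rw [h] at h1 hne <;>
    rcases m2 with h' | h' | h' <;> rw [h'] at h2
  · exact absurd rfl (h' ▸ hne)
  · exact absurd hedge.symm (fun hh => noTri h1 hedge h2.symm)
  · exact ⟨h2, Or.inl h1⟩
  · exact absurd hedge (fun hh => noTri h2 hedge h1.symm)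
  · exact absurd rfl (h' ▸ hne)
  · exact ⟨h2, Or.inr h1⟩
  · exact ⟨h1, Or.inl h2⟩
  · exact ⟨h1, Or.inr h2⟩
  · exact absurd rfl (h' ▸ hne)

lemma c4_core (noC4 : NoC4 G) {x y ti tc : V} (h1 : G.Adj x ti) (h2 : G.Adj y ti)
    (hxc : G.Adj x tc) (hyc : G.Adj y tc) (hxy : x ≠ y) (hic : ti ≠ tc) : False :=
  noC4 h1 h2.symm hyc hxc.symm hxy hic

lemma final_helper (noC4 : NoC4 G) {ta tb tc u v w : V}
    (hac : ta ≠ tc) (hbc : tb ≠ tc)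
    (huv : u ≠ v) (huw : u ≠ w) (hvw : v ≠ w)
    (hu : G.Adj u tc ∧ (G.Adj u ta ∨ G.Adj u tb))
    (hv : G.Adj v tc ∧ (G.Adj v ta ∨ G.Adj v tb))
    (hw : G.Adj w tc ∧ (G.Adj w ta ∨ G.Adj w tb)) : False := by
  obtain ⟨huc, hu'⟩ := hu
  obtain ⟨hvc, hv'⟩ := hv
  obtain ⟨hwc, hw'⟩ := hw
  rcases hu' with h1 | h1 <;> rcases hv' with h2 | h2 <;> rcases hw' with h3 | h3
  · exact c4_core noC4 h1 h2 huc hvc huv hac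
  · exact c4_core noC4 h1 h2 huc hvc huv hac
  · exact c4_core noC4 h1 h3 huc hwc huw hac
  · exact c4_core noC4 h2 h3 hvc hwc hvw hbc
  · exact c4_core noC4 h2 h3 hvc hwc hvw hac
  · exact c4_core noC4 h1 h3 huc hwc huw hbc
  · exact c4_core noC4 h1 h2 huc hvc huv hbc
  · exact c4_core noC4 h1 h2 huc hvc huv hbc

lemma rot3 {W : Type*} {a x y z : W} (h : a = x ∨ a = y ∨ a = z) :
    a = y ∨ a = z ∨ a = x := by tauto

lemma sw3 {W : Type*} {a x y z : W} (h : a = x ∨ a = y ∨ a = z) :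
    a = x ∨ a = z ∨ a = y := by tauto

lemma no_three [DecidableEq V] (noTri : NoTri G) (noC4 : NoC4 G) (noC5 : NoC5 G)
    (two_nbrs_mem : ∀ {a u : V} {c : G.Walk a a}, c.IsCycle → u ∈ c.support →
      ∃ w1 w2, w1 ≠ w2 ∧ G.Adj u w1 ∧ G.Adj u w2)
    {t1 t2 t3 : V} (h12 : t1 ≠ t2) (h13 : t1 ≠ t3) (h23 : t2 ≠ t3)
    (hall : ∀ x, x ≠ t1 → x ≠ t2 → x ≠ t3 →
      (G.Adj x t1 ∧ G.Adj t2 t3) ∨ (G.Adj x t2 ∧ G.Adj t1 t3) ∨ (G.Adj x t3 ∧ G.Adj t1 t2))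
    {v0 : V} {p : G.Walk v0 v0} (hp : p.IsCycle) (hlen : 6 ≤ p.length) : False := by
  obtain ⟨u, v, w, hus, hvs, hws, huv, huw, hvw, hu, hv, hw⟩ := exists_outside3 hp hlen t1 t2 t3
  simp only [Finset.mem_insert, Finset.mem_singleton] at hu hv hw
  push_neg at hu hv hw
  obtain ⟨hu1, hu2, hu3⟩ := hu
  obtain ⟨hv1, hv2, hv3⟩ := hv
  obtain ⟨hw1, hw2, hw3⟩ := hw
  obtain ⟨a1, a2, ha, ha1, ha2⟩ := two_nbrs_mem hp hus
  obtain ⟨b1, b2, hb, hb1, hb2⟩ := two_nbrs_mem hp hvs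
  obtain ⟨c1, c2, hc, hc1, hc2⟩ := two_nbrs_mem hp hws
  have ma1 := nbr_in_T noTri noC5 h12 h13 h23 hall hu1 hu2 hu3 ha1
  have ma2 := nbr_in_T noTri noC5 h12 h13 h23 hall hu1 hu2 hu3 ha2
  have mb1 := nbr_in_T noTri noC5 h12 h13 h23 hall hv1 hv2 hv3 hb1
  have mb2 := nbr_in_T noTri noC5 h12 h13 h23 hall hv1 hv2 hv3 hb2
  have mc1 := nbr_in_T noTri noC5 h12 h13 h23 hall hw1 hw2 hw3 hc1
  have mc2 := nbr_in_T noTri noC5 h12 h13 h23 hall hw1 hw2 hw3 hc2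
  have hE : G.Adj t2 t3 ∨ G.Adj t1 t3 ∨ G.Adj t1 t2 := by
    rcases hall u hu1 hu2 hu3 with ⟨-, h⟩ | ⟨-, h⟩ | ⟨-, h⟩
    exacts [Or.inl h, Or.inr (Or.inl h), Or.inr (Or.inr h)]
  rcases hE with he | he | he
  · exact final_helper noC4 h12.symm h13.symm huv huw hvw
      (pickP noTri he ha1 ha2 ha (rot3 ma1) (rot3 ma2))
      (pickP noTri he hb1 hb2 hb (rot3 mb1) (rot3 mb2))
      (pickP noTri he hc1 hc2 hc (rot3 mc1) (rot3 mc2))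
  · exact final_helper noC4 h12 h23.symm huv huw hvw
      (pickP noTri he ha1 ha2 ha (sw3 ma1) (sw3 ma2))
      (pickP noTri he hb1 hb2 hb (sw3 mb1) (sw3 mb2))
      (pickP noTri he hc1 hc2 hc (sw3 mc1) (sw3 mc2))
  · exact final_helper noC4 h13 h23 huv huw hvw
      (pickP noTri he ha1 ha2 ha ma1 ma2)
      (pickP noTri he hb1 hb2 hb mb1 mb2)
      (pickP noTri he hc1 hc2 hc mc1 mc2)


section Main
variable {V : Type*} [Fintype V] [DecidableEq V] {G : SimpleGraph V}

set_option linter.unusedSectionVars false in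
lemma pds_pair_kill (noTri : NoTri G) (noC4 : NoC4 G)
    {v0 : V} {p : G.Walk v0 v0} (hp : p.IsCycle) (hlen : 6 ≤ p.length)
    {x y : V} (hxy : x ≠ y) (hPDS : IsPairedDomSet G {x, y}) : False := by
  have hadj := pds_pair hxy hPDS
  have hdom : ∀ v : V, v = x ∨ v = y ∨ G.Adj x v ∨ G.Adj y v := by
    intro v
    rcases hPDS.1 v with h | ⟨u, hu, hadj'⟩
    · simp only [Set.mem_insert_iff, Set.mem_singleton_iff] at h; tauto
    · simp only [Set.mem_insert_iff, Set.mem_singleton_iff] at hu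
      rcases hu with rfl | rfl
      · exact Or.inr (Or.inr (Or.inl hadj'))
      · exact Or.inr (Or.inr (Or.inr hadj'))
  exact no_dom_edge noTri noC4 hadj hdom hp hlen (fun hc hu => two_nbrs_mem hc hu)

lemma parts_card_lt (noTri : NoTri G) (noC4 : NoC4 G) (noC5 : NoC5 G)
    {v0 : V} {p : G.Walk v0 v0} (hp : p.IsCycle) (hlen : 6 ≤ p.length)
    (π : Finpartition (Finset.univ : Finset V)) (hpc : IsPCPartition G π) :
    π.parts.card < Fintype.card V - 2 := by
  classical
  by_contra hk'
  push_neg at hk'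
  set n := Fintype.card V with hn
  set k := π.parts.card with hkdef
  have hn6 : 6 ≤ n := by
    have hnd := hp.support_nodup
    have hle := List.Nodup.length_le_card hnd
    have hl : p.support.tail.length = p.length := by
      rw [List.length_tail, Walk.length_support]; omega
    omega
  have hkn : k ≤ n := by simpa using π.card_parts_le_card
  have hsum : ∑ A ∈ π.parts, A.card = n := by simpa using π.sum_card_parts
  have hone : ∀ A ∈ π.parts, 1 ≤ A.card := fun A hA =>
    Finset.card_pos.mpr (π.nonempty_of_mem_parts hA)
  have key1 : ∀ A ∈ π.parts, A.card + (k - 1) ≤ n := by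
    intro A hA
    have h1 : ∑ B ∈ π.parts.erase A, 1 ≤ ∑ B ∈ π.parts.erase A, B.card :=
      Finset.sum_le_sum fun B hB => hone B (Finset.mem_of_mem_erase hB)
    have h2 : (∑ B ∈ π.parts.erase A, B.card) + A.card = n := by
      rw [Finset.sum_erase_add _ _ hA]; exact hsum
    have h3 : (π.parts.erase A).card = k - 1 := by
      rw [Finset.card_erase_of_mem hA]
    rw [Finset.sum_const, smul_eq_mul, mul_one, h3] at h1
    omega
  have key2 : ∀ A ∈ π.parts, ∀ B ∈ π.parts, A ≠ B → A.card + B.card + (k - 2) ≤ n := by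
    intro A hA B hB hAB
    have hBer : B ∈ π.parts.erase A := Finset.mem_erase.mpr ⟨fun h => hAB h.symm, hB⟩
    have h2 : (∑ C ∈ π.parts.erase A, C.card) + A.card = n := by
      rw [Finset.sum_erase_add _ _ hA]; exact hsum
    have h3 : (∑ C ∈ (π.parts.erase A).erase B, C.card) + B.card
        = ∑ C ∈ π.parts.erase A, C.card := by
      rw [Finset.sum_erase_add _ _ hBer]
    have h1 : ∑ C ∈ (π.parts.erase A).erase B, 1
        ≤ ∑ C ∈ (π.parts.erase A).erase B, C.card :=
      Finset.sum_le_sum fun C hC =>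
        hone C (Finset.mem_of_mem_erase (Finset.mem_of_mem_erase hC))
    have h4 : ((π.parts.erase A).erase B).card = k - 1 - 1 := by
      rw [Finset.card_erase_of_mem hBer, Finset.card_erase_of_mem hA]
    rw [Finset.sum_const, smul_eq_mul, mul_one, h4] at h1
    have hk1 : 1 ≤ k := Finset.card_pos.mpr ⟨A, hA⟩
    have hk2 : 2 ≤ k := Finset.one_lt_card.mpr ⟨A, hA, B, hB, hAB⟩
    omega
  have hsingpart : ∀ x : V, ({x} : Finset V) ∈ π.parts → False ∨ True := fun _ _ => Or.inr trivial
  by_cases hex : ∃ T ∈ π.parts, T.card = 3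
  · obtain ⟨T, hTp, hT3⟩ := hex
    have hsing : ∀ A ∈ π.parts, A ≠ T → A.card = 1 := by
      intro A hA hAT
      have := key2 A hA T hTp hAT
      have := hone A hA
      omega
    have hxpart : ∀ x : V, x ∉ T → ({x} : Finset V) ∈ π.parts := by
      intro x hx
      obtain ⟨A, hA, hxA⟩ := π.exists_mem (Finset.mem_univ x)
      have hAT : A ≠ T := fun h => hx (h ▸ hxA)
      obtain ⟨y, hy⟩ := Finset.card_eq_one.mp (hsing A hA hAT)
      subst hy
      rw [Finset.mem_singleton] at hxA
      subst hxA
      exact hA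
    obtain ⟨t1, t2, t3, h12, h13, h23, hTeq⟩ := Finset.card_eq_three.mp hT3
    have hall : ∀ x, x ≠ t1 → x ≠ t2 → x ≠ t3 →
        (G.Adj x t1 ∧ G.Adj t2 t3) ∨ (G.Adj x t2 ∧ G.Adj t1 t3) ∨
          (G.Adj x t3 ∧ G.Adj t1 t2) := by
      intro x hx1 hx2 hx3
      have hxT : x ∉ T := by rw [hTeq]; simp [hx1, hx2, hx3]
      have hxp := hxpart x hxT
      obtain ⟨-, B, hB, hBne, hco⟩ := hpc _ hxp
      have hev := coalition_even hco
      rw [Finset.card_singleton] at hev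
      have hB3 : B.card = 1 ∨ B.card = 3 := by
        have := key1 B hB
        have := hone B hB
        obtain ⟨m, hm⟩ := hev
        omega
      rcases hB3 with h1 | h3
      · exfalso
        obtain ⟨y, hy⟩ := Finset.card_eq_one.mp h1
        subst hy
        have hxy : x ≠ y := by rintro rfl; exact hBne rfl
        obtain ⟨-, -, -, hPDS⟩ := hco
        have hs : ((({x} : Finset V) : Set V) ∪ (({y} : Finset V) : Set V)) = {x, y} := by
          ext v
          simp only [Set.mem_union, Finset.coe_singleton, Set.mem_singleton_iff,
            Set.mem_insert_iff]
        rw [hs] at hPDS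
        exact pds_pair_kill noTri noC4 hp hlen hxy hPDS
      · have hBT : B = T := by
          by_contra hBT
          have := key2 B hB T hTp hBT
          omega
        obtain ⟨-, -, -, hPDS⟩ := hco
        rw [hBT, hTeq] at hPDS
        have hs : ((({x} : Finset V) : Set V) ∪ (({t1, t2, t3} : Finset V) : Set V))
            = {t1, t2, t3, x} := by
          ext v
          simp only [Set.mem_union, Finset.coe_singleton, Set.mem_singleton_iff,
            Finset.coe_insert, Set.mem_insert_iff]
          tauto
        rw [hs] at hPDS
        exact pds_quad h12 h13 h23 hx1 hx2 hx3 hPDS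
    exact no_three noTri noC4 noC5 (fun hc hu => two_nbrs_mem hc hu)
      h12 h13 h23 hall hp hlen
  · push_neg at hex
    have hsing : ∃ A ∈ π.parts, A.card = 1 := by
      by_contra hno
      push_neg at hno
      have h2 : ∀ A ∈ π.parts, 2 ≤ A.card := by
        intro A hA
        have := hone A hA
        have := hno A hA
        omega
      have hge : ∑ A ∈ π.parts, 2 ≤ ∑ A ∈ π.parts, A.card := Finset.sum_le_sum h2
      rw [Finset.sum_const, smul_eq_mul] at hge
      omega
    obtain ⟨A, hA, hA1⟩ := hsing
    obtain ⟨x, hx⟩ := Finset.card_eq_one.mp hA1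
    subst hx
    obtain ⟨-, B, hB, hBne, hco⟩ := hpc _ hA
    have hev := coalition_even hco
    rw [Finset.card_singleton] at hev
    have hB1 : B.card = 1 := by
      have := key1 B hB
      have := hone B hB
      have h3 := hex B hB
      obtain ⟨m, hm⟩ := hev
      omega
    obtain ⟨y, hy⟩ := Finset.card_eq_one.mp hB1
    subst hy
    have hxy : x ≠ y := by rintro rfl; exact hBne rfl
    obtain ⟨-, -, -, hPDS⟩ := hco
    have hs : ((({x} : Finset V) : Set V) ∪ (({y} : Finset V) : Set V)) = {x, y} := by
      ext v
      simp only [Set.mem_union, Finset.coe_singleton, Set.mem_singleton_iff,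
        Set.mem_insert_iff]
    rw [hs] at hPDS
    exact pds_pair_kill noTri noC4 hp hlen hxy hPDS

end Main
end PCAux

open PCPaper in
/-- If `G` contains a cycle and has girth at least `6`, then `PC(G) < n - 2`. -/
theorem stmt_19 {V : Type*} [Fintype V] [DecidableEq V] (G : SimpleGraph V)
    (hcyc : ¬ G.IsAcyclic) (hg : 6 ≤ G.girth) :
    pcNumber G < Fintype.card V - 2 := by
  classical
  have h6 : ∀ ⦃a : V⦄ (w : G.Walk a a), w.IsCycle → 6 ≤ w.length := fun _ w hw => PCAux.cycle_len hg hcyc w hw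
  obtain ⟨v0, p, hp, -⟩ := SimpleGraph.exists_girth_eq_length.mpr hcyc
  have hlen : 6 ≤ p.length := h6 p hp
  have hnoTri : PCAux.NoTri G := fun hab hbc hca => PCAux.noTri_of h6 hab hbc hca
  have hnoC4 : PCAux.NoC4 G := fun hab hbc hcd hda hac hbd => PCAux.noC4_of h6 hab hbc hcd hda hac hbd
  have hnoC5 : PCAux.NoC5 G := fun hab hbc hcd hde hea hac had hbd hbe hce =>
    PCAux.noC5_of h6 hab hbc hcd hde hea hac had hbd hbe hce
  have hn6 : 6 ≤ Fintype.card V := by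
    have hnd := hp.support_nodup
    have hle := List.Nodup.length_le_card hnd
    have hl : p.support.tail.length = p.length := by
      rw [List.length_tail, SimpleGraph.Walk.length_support]; omega
    omega
  have hmain : ∀ kk ∈ {k | ∃ π : Finpartition (Finset.univ : Finset V),
      IsPCPartition G π ∧ π.parts.card = k}, kk < Fintype.card V - 2 := by
    rintro kk ⟨π, hπ, rfl⟩
    exact PCAux.parts_card_lt hnoTri hnoC4 hnoC5 hp hlen π hπ
  rw [pcNumber]
  rcases Set.eq_empty_or_nonempty {k | ∃ π : Finpartition (Finset.univ : Finset V),
      IsPCPartition G π ∧ π.parts.card = k} with h | h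
  · rw [h, csSup_empty]
    simp only [Nat.bot_eq_zero]
    omega
  · have hbdd : BddAbove {k | ∃ π : Finpartition (Finset.univ : Finset V),
        IsPCPartition G π ∧ π.parts.card = k} := by
      refine ⟨Fintype.card V, ?_⟩
      rintro kk ⟨π, -, rfl⟩
      simpa using π.card_parts_le_card
    exact hmain _ (Nat.sSup_mem h hbdd)
end
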